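/- Let x be an n×n real matrix such that the operator norm of ad_x (acting on n×n matrices, ad_x(y) = xy − yx) is strictly less than 2π. Then for every n×n matrix y the Bernoulli series dexp_x^{-1}(y) = Σ_{j=0}^{∞} (B_j / j!) ad_x^j(y) converges, where B_j are the Bernoulli numbers, and it inverts the right trivialized tangent of the exponential: dexp_x( dexp_x^{-1}(y) ) = y and dexp_x^{-1}( dexp_x(y) ) = y, where dexp_x(y) = Σ_{j=0}^{∞} (1/(j+1)!) ad_x^j(y). -/

import Mathlib

attribute [local instance]
  Matrix.linftyOpNormedAddCommGroup Matrix.linftyOpNormedRing Matrix.linftyOpNormedAlgebra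

/-- The adjoint operator `ad_x(y) = xy − yx` on square matrices, as a continuous linear
map. -/
noncomputable def adC {n : ℕ} (x : Matrix (Fin n) (Fin n) ℝ) :
    Matrix (Fin n) (Fin n) ℝ →L[ℝ] Matrix (Fin n) (Fin n) ℝ :=
  LinearMap.toContinuousLinearMap (LinearMap.mulLeft ℝ x - LinearMap.mulRight ℝ x)

open Real Finset

private lemma bern_bound (j : ℕ) :
    |((bernoulli j : ℚ) : ℝ)| / (Nat.factorial j : ℝ) ≤ 4 / (2 * π) ^ j := by
  have hπ : (0:ℝ) < π := Real.pi_pos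
  match j with
  | 0 => norm_num
  | 1 =>
      rw [show |((bernoulli 1 : ℚ) : ℝ)| = 1/2 by rw [bernoulli_one]; norm_num]
      rw [Nat.factorial_one, Nat.cast_one, div_one, pow_one,
        div_le_div_iff₀ (by norm_num) (by positivity)]
      nlinarith [Real.pi_le_four]
  | (k+2) =>
      rcases Nat.even_or_odd (k+2) with he | ho
      · obtain ⟨m, hm⟩ := he
        have hm' : k + 2 = 2 * m := by omega
        have hm0 : m ≠ 0 := by omega
        have hS := hasSum_zeta_nat hm0
        set S : ℝ := ∑' i : ℕ, 1 / (i : ℝ) ^ (2 * m) with hSdef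
        have hSeq : S = (-1 : ℝ) ^ (m + 1) * (2:ℝ) ^ (2*m - 1) * π ^ (2*m) *
            ((bernoulli (2*m) : ℚ) : ℝ) / (Nat.factorial (2*m) : ℝ) := hS.tsum_eq
        have hSnonneg : 0 ≤ S := tsum_nonneg (fun i => by positivity)
        have hS2 : HasSum (fun i : ℕ => 1 / (i : ℝ) ^ 2) (π ^ 2 / 6) := hasSum_zeta_two
        have hSle : S ≤ π ^ 2 / 6 := by
          rw [← hS2.tsum_eq]
          refine Summable.tsum_le_tsum (fun i => ?_) hS.summable hS2.summable
          rcases Nat.eq_zero_or_pos i with hi | hi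
          · subst hi
            rw [Nat.cast_zero, zero_pow (by omega : 2*m ≠ 0),
              zero_pow (two_ne_zero), div_zero]
          · have h1 : (1:ℝ) ≤ (i:ℝ) := by exact_mod_cast hi
            have : (i:ℝ) ^ 2 ≤ (i:ℝ) ^ (2*m) := pow_le_pow_right₀ h1 (by omega)
            apply div_le_div_of_nonneg_left (by norm_num) (by positivity) this
        have hSle2 : S ≤ 2 := by
          refine hSle.trans ?_
          nlinarith [Real.pi_lt_d2]
        have habs : (2:ℝ) ^ (2*m - 1) * π ^ (2*m) *
            (|((bernoulli (2*m) : ℚ) : ℝ)| / (Nat.factorial (2*m) : ℝ)) = S := by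
          have := congrArg abs hSeq
          rw [abs_of_nonneg hSnonneg] at this
          rw [this, abs_div, abs_mul, abs_mul, abs_mul, abs_pow, abs_neg, abs_one,
            one_pow, one_mul, abs_of_nonneg (by positivity : (0:ℝ) ≤ (2:ℝ)^(2*m-1)),
            abs_of_nonneg (by positivity : (0:ℝ) ≤ π^(2*m)),
            abs_of_nonneg (by positivity : (0:ℝ) ≤ (Nat.factorial (2*m) : ℝ))]
          ring
        have hkey : |((bernoulli (2*m) : ℚ) : ℝ)| / (Nat.factorial (2*m) : ℝ)
            = S / ((2:ℝ) ^ (2*m - 1) * π ^ (2*m)) := by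
          field_simp at habs ⊢
          linarith [habs]
        rw [hm', hkey]
        have hpow : (2 * π) ^ (2*m) = 2 * ((2:ℝ)^(2*m-1) * π^(2*m)) := by
          rw [mul_pow]
          have : (2:ℝ)^(2*m) = 2 * 2^(2*m-1) := by
            rw [← pow_succ']
            congr 1
            omega
          rw [this]; ring
        rw [hpow, div_le_div_iff₀ (by positivity) (by positivity)]
        nlinarith [hSle2, mul_pos (pow_pos (by norm_num : (0:ℝ) < 2) (2*m-1))
          (pow_pos hπ (2*m))]
      · have hb : (bernoulli (k+2) : ℚ) = 0 := by
          rw [bernoulli, bernoulli'_eq_zero_of_odd ho (by omega), mul_zero]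
        rw [hb]
        simp
        positivity

private lemma coef_id (m : ℕ) :
    ∑ p ∈ Finset.HasAntidiagonal.antidiagonal m,
      (bernoulli p.1 / (Nat.factorial p.1 : ℚ)) * (1 / (Nat.factorial (p.2 + 1) : ℚ))
      = if m = 0 then 1 else 0 := by
  rw [Finset.Nat.sum_antidiagonal_eq_sum_range_succ_mk]
  have h1 : ∀ i ∈ Finset.range (m+1),
      (bernoulli i / (Nat.factorial i : ℚ)) * (1 / (Nat.factorial (m - i + 1) : ℚ))
      = (((m+1).choose i : ℕ) : ℚ) * bernoulli i / (Nat.factorial (m+1) : ℚ) := by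
    intro i hi
    rw [Finset.mem_range] at hi
    have hi' : i ≤ m := by omega
    rw [Nat.cast_choose ℚ (by omega : i ≤ m+1), Nat.succ_sub hi']
    have f1 : ((Nat.factorial i : ℚ)) ≠ 0 := Nat.cast_ne_zero.mpr (Nat.factorial_ne_zero i)
    have f2 : ((Nat.factorial (m - i + 1) : ℚ)) ≠ 0 :=
      Nat.cast_ne_zero.mpr (Nat.factorial_ne_zero _)
    have f3 : ((Nat.factorial (m + 1) : ℚ)) ≠ 0 :=
      Nat.cast_ne_zero.mpr (Nat.factorial_ne_zero _)
    field_simp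
  rw [Finset.sum_congr rfl h1, ← Finset.sum_div, sum_bernoulli]
  rcases Nat.eq_zero_or_pos m with hm | hm
  · simp [hm]
  · rw [if_neg (by omega), if_neg (by omega), zero_div]

private lemma coef_id_real (m : ℕ) :
    ∑ p ∈ Finset.HasAntidiagonal.antidiagonal m,
      (((bernoulli p.1 : ℚ) : ℝ) / (Nat.factorial p.1 : ℝ)) *
        ((Nat.factorial (p.2 + 1) : ℝ))⁻¹
      = if m = 0 then 1 else 0 := by
  have := congrArg (fun q : ℚ => (q : ℝ)) (coef_id m)
  push_cast at this
  convert this using 2 with p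
  · rw [div_eq_mul_inv, div_eq_mul_inv]
    push_cast
    ring
  · split <;> norm_num

private lemma opnorm_pow_le {E : Type*} [NormedAddCommGroup E] [NormedSpace ℝ E]
    (T : E →L[ℝ] E) (j : ℕ) : ‖T ^ j‖ ≤ ‖T‖ ^ j := by
  induction j with
  | zero => rw [pow_zero, pow_zero]; exact ContinuousLinearMap.norm_id_le
  | succ k ih =>
      rw [pow_succ, pow_succ]
      exact (norm_mul_le _ _).trans (mul_le_mul ih le_rfl (norm_nonneg _)
        (pow_nonneg (norm_nonneg _) _))

set_option maxHeartbeats 1000000 in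
set_option synthInstance.maxHeartbeats 1000000 in
private lemma general_inv {E : Type*} [NormedAddCommGroup E] [NormedSpace ℝ E]
    [CompleteSpace E] (T : E →L[ℝ] E) (hx : ‖T‖ < 2 * Real.pi) :
    (∀ y : E,
      Summable fun j : ℕ =>
        (((bernoulli j : ℚ) : ℝ) / (Nat.factorial j : ℝ)) • (T ^ j) y)
    ∧ (∀ y : E,
        (∑' j : ℕ, ((Nat.factorial (j + 1) : ℝ))⁻¹ •
          (T ^ j) (∑' i : ℕ,
            (((bernoulli i : ℚ) : ℝ) / (Nat.factorial i : ℝ)) • (T ^ i) y)) = y)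
    ∧ (∀ y : E,
        (∑' j : ℕ, (((bernoulli j : ℚ) : ℝ) / (Nat.factorial j : ℝ)) •
          (T ^ j) (∑' i : ℕ,
            ((Nat.factorial (i + 1) : ℝ))⁻¹ • (T ^ i) y)) = y) := by
  have hπ : (0:ℝ) < π := Real.pi_pos
  set c : ℕ → ℝ := fun j => ((Nat.factorial (j+1) : ℝ))⁻¹ with hc
  set d : ℕ → ℝ := fun j => ((bernoulli j : ℚ) : ℝ) / (Nat.factorial j : ℝ) with hd
  set a : ℕ → (E →L[ℝ] E) := fun j => c j • T ^ j with ha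
  set b : ℕ → (E →L[ℝ] E) := fun j => d j • T ^ j with hb
  -- summability of the operator series
  have hna : Summable fun j => ‖a j‖ := by
    refine Summable.of_nonneg_of_le (fun j => norm_nonneg _) (fun j => ?_)
      (Real.summable_pow_div_factorial ‖T‖)
    show ‖c j • T ^ j‖ ≤ ‖T‖ ^ j / (Nat.factorial j : ℝ)
    refine (ContinuousLinearMap.opNorm_smul_le (c j) (T ^ j)).trans ?_
    have h1 : ‖c j‖ ≤ ((Nat.factorial j : ℝ))⁻¹ := by
      rw [hc, Real.norm_eq_abs, abs_of_nonneg (by positivity)]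
      exact inv_anti₀ (by positivity)
        (by exact_mod_cast Nat.factorial_le (Nat.le_succ j))
    calc ‖c j‖ * ‖T ^ j‖ ≤ ((Nat.factorial j : ℝ))⁻¹ * ‖T‖ ^ j :=
          mul_le_mul h1 (opnorm_pow_le T j) (norm_nonneg _) (by positivity)
      _ = ‖T‖ ^ j / (Nat.factorial j : ℝ) := by rw [div_eq_mul_inv]; ring
  have hr : ‖T‖ / (2 * π) < 1 := (div_lt_one (by positivity)).mpr hx
  have hnb : Summable fun j => ‖b j‖ := by
    refine Summable.of_nonneg_of_le (fun j => norm_nonneg _) (fun j => ?_)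
      ((summable_geometric_of_lt_one (by positivity) hr).mul_left 4)
    show ‖d j • T ^ j‖ ≤ 4 * (‖T‖ / (2 * π)) ^ j
    refine (ContinuousLinearMap.opNorm_smul_le (d j) (T ^ j)).trans ?_
    have h1 : ‖d j‖ ≤ 4 / (2 * π) ^ j := by
      rw [hd, Real.norm_eq_abs, abs_div, abs_of_nonneg (by positivity :
        (0:ℝ) ≤ (Nat.factorial j : ℝ))]
      exact bern_bound j
    calc ‖d j‖ * ‖T ^ j‖ ≤ (4 / (2 * π) ^ j) * ‖T‖ ^ j :=
          mul_le_mul h1 (opnorm_pow_le T j) (norm_nonneg _) (by positivity)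
      _ = 4 * (‖T‖ / (2 * π)) ^ j := by rw [div_pow]; ring
  have hsa : Summable a := hna.of_norm
  have hsb : Summable b := hnb.of_norm
  -- the Cauchy products equal 1
  have hdelta : (∑' m : ℕ, (if m = 0 then (1:ℝ) else 0) • T ^ m) = 1 := by
    rw [tsum_eq_single 0 (fun m hm => by rw [if_neg hm, zero_smul])]
    simp
  have hswap : ∀ m : ℕ, (∑ p ∈ Finset.HasAntidiagonal.antidiagonal m, c p.1 * d p.2)
      = if m = 0 then (1:ℝ) else 0 := by
    intro m
    have := Finset.Nat.sum_antidiagonal_swap (n := m)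
      (f := fun p : ℕ × ℕ => d p.1 * c p.2)
    rw [← coef_id_real m, ← this]
    exact Finset.sum_congr rfl (fun p _ => by simp [Prod.swap, mul_comm])
  have hGF : (∑' j, a j) * (∑' j, b j) = 1 := by
    rw [tsum_mul_tsum_eq_tsum_sum_antidiagonal_of_summable_norm hna hnb, ← hdelta]
    refine tsum_congr fun m => ?_
    have h1 : ∀ p ∈ Finset.HasAntidiagonal.antidiagonal m, a p.1 * b p.2 = (c p.1 * d p.2) • T ^ m := by
      intro p hp
      rw [Finset.HasAntidiagonal.mem_antidiagonal] at hp
      rw [ha, hb]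
      show (c p.1 • T ^ p.1) * (d p.2 • T ^ p.2) = (c p.1 * d p.2) • T ^ m
      rw [smul_mul_smul_comm, ← pow_add, hp]
    rw [Finset.sum_congr rfl h1, ← Finset.sum_smul, hswap]
  have hFG : (∑' j, b j) * (∑' j, a j) = 1 := by
    rw [tsum_mul_tsum_eq_tsum_sum_antidiagonal_of_summable_norm hnb hna, ← hdelta]
    refine tsum_congr fun m => ?_
    have h1 : ∀ p ∈ Finset.HasAntidiagonal.antidiagonal m, b p.1 * a p.2 = (d p.1 * c p.2) • T ^ m := by
      intro p hp
      rw [Finset.HasAntidiagonal.mem_antidiagonal] at hp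
      rw [ha, hb]
      show (d p.1 • T ^ p.1) * (c p.2 • T ^ p.2) = (d p.1 * c p.2) • T ^ m
      rw [smul_mul_smul_comm, ← pow_add, hp]
    rw [Finset.sum_congr rfl h1, ← Finset.sum_smul, coef_id_real]
  -- evaluation of operator tsums
  have key : ∀ (e : ℕ → (E →L[ℝ] E)), Summable e → ∀ z : E,
      (∑' j, (e j) z) = (∑' j, e j) z := by
    intro e he z
    exact ((ContinuousLinearMap.apply ℝ E z).map_tsum he).symm
  refine ⟨fun y => ?_, fun y => ?_, fun y => ?_⟩
  · have := (hsb.hasSum.mapL (ContinuousLinearMap.apply ℝ E y)).summable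
    refine this.congr fun j => ?_
    simp [hb, hd]
  · have hby : (∑' i : ℕ, d i • (T ^ i) y) = (∑' i, b i) y := by
      rw [← key b hsb y]
      exact tsum_congr fun i => by simp [hb]
    rw [hby]
    have h2 : (∑' j : ℕ, c j • (T ^ j) ((∑' i, b i) y))
        = (∑' j, a j) ((∑' i, b i) y) := by
      rw [← key a hsa]
      exact tsum_congr fun j => by simp [ha]
    rw [h2, ← ContinuousLinearMap.comp_apply, ← ContinuousLinearMap.mul_def, hGF,
      ContinuousLinearMap.one_apply]
  · have hay : (∑' i : ℕ, c i • (T ^ i) y) = (∑' i, a i) y := by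
      rw [← key a hsa y]
      exact tsum_congr fun i => by simp [ha]
    rw [hay]
    have h2 : (∑' j : ℕ, d j • (T ^ j) ((∑' i, a i) y))
        = (∑' j, b j) ((∑' i, a i) y) := by
      rw [← key b hsb]
      exact tsum_congr fun j => by simp [hb]
    rw [h2, ← ContinuousLinearMap.comp_apply, ← ContinuousLinearMap.mul_def, hFG,
      ContinuousLinearMap.one_apply]

/-- If the operator norm of `ad_x` is strictly less than `2π`, then for every `y` the
Bernoulli series `dexp_x⁻¹(y) = ∑_{j≥0} (B_j/j!) ad_x^j(y)` converges, and it inverts the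
right trivialized tangent `dexp_x(y) = ∑_{j≥0} ad_x^j(y)/(j+1)!` of the exponential. -/
theorem stmt_19 {n : ℕ} (x : Matrix (Fin n) (Fin n) ℝ)
    (hx : @Norm.norm _ ContinuousLinearMap.hasOpNorm (adC x) < 2 * Real.pi) :
    (∀ y : Matrix (Fin n) (Fin n) ℝ,
      Summable fun j : ℕ =>
        (((bernoulli j : ℚ) : ℝ) / (Nat.factorial j : ℝ)) • (adC x ^ j) y)
    ∧ (∀ y : Matrix (Fin n) (Fin n) ℝ,
        (∑' j : ℕ, ((Nat.factorial (j + 1) : ℝ))⁻¹ •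
          (adC x ^ j) (∑' i : ℕ,
            (((bernoulli i : ℚ) : ℝ) / (Nat.factorial i : ℝ)) • (adC x ^ i) y)) = y)
    ∧ (∀ y : Matrix (Fin n) (Fin n) ℝ,
        (∑' j : ℕ, (((bernoulli j : ℚ) : ℝ) / (Nat.factorial j : ℝ)) •
          (adC x ^ j) (∑' i : ℕ,
            ((Nat.factorial (i + 1) : ℝ))⁻¹ • (adC x ^ i) y)) = y) :=
  general_inv (adC x) hx
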